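/- arXiv:2305.10258 — 6 statements merged into one kernel-verified Lean document; each statement's English description precedes it below -/
import Mathlib

section
/- Under the standing assumptions, C* := ⋃𝒞 is a chain of P. -/
/-- The set of strict upper bounds of a chain `C`. -/
def U {P : Type*} [PartialOrder P] (C : Set P) : Set P := {x | ∀ y ∈ C, y < x}

/-- `𝒞₀` : the set of all chains `C` of `P` satisfying condition (i-C):
for every `S ⊆ C` with `U S ⊈ U C`, one has `f (U S) ∈ C`. -/
def Cfam0 {P : Type*} [PartialOrder P] (f : Set P → P) : Set (Set P) :=
  {C | IsChain (· ≤ ·) C ∧ ∀ S ⊆ C, ¬ U S ⊆ U C → f (U S) ∈ C}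

/-- `𝒞` : the set of all `C ∈ 𝒞₀` satisfying condition (ii-C):
for every `C' ∈ 𝒞₀`, one has `C \ C' ⊆ U C'`. -/
def Cfam {P : Type*} [PartialOrder P] (f : Set P → P) : Set (Set P) :=
  {C | C ∈ Cfam0 f ∧ ∀ C' ∈ Cfam0 f, C \ C' ⊆ U C'}

/-- `C* := ⋃𝒞` is a chain of `P`. -/
theorem stmt_5 {P : Type*} [PartialOrder P] [Nonempty P]
    (hub : ∀ C : Set P, IsChain (· ≤ ·) C → ∃ x : P, ∀ y ∈ C, y ≤ x)
    (hnomax : ∀ m : P, ∃ x : P, m < x)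
    (f : Set P → P) (hf : ∀ C : Set P, IsChain (· ≤ ·) C → f (U C) ∈ U C) :
    IsChain (· ≤ ·) (⋃₀ Cfam f) := by
  rintro x ⟨C1, hC1, hx⟩ y ⟨C2, hC2, hy⟩ hxy
  by_cases hxC2 : x ∈ C2
  · exact hC2.1.1 hxC2 hy hxy
  · exact Or.inr (le_of_lt ((hC1.2 C2 hC2.1) ⟨hx, hxC2⟩ y hy))
end

section
/- Under the standing assumptions, if S ⊆ C* := ⋃𝒞 and U_S ⊄ U_C for some C ∈ 𝒞, then S ⊆ C. -/
/-- If `S ⊆ C* := ⋃𝒞` and `U S ⊈ U C` for some `C ∈ 𝒞`, then `S ⊆ C`. -/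
theorem stmt_6 {P : Type*} [PartialOrder P] [Nonempty P]
    (hub : ∀ C : Set P, IsChain (· ≤ ·) C → ∃ x : P, ∀ y ∈ C, y ≤ x)
    (hnomax : ∀ m : P, ∃ x : P, m < x)
    (f : Set P → P) (hf : ∀ C : Set P, IsChain (· ≤ ·) C → f (U C) ∈ U C)
    (S : Set P) (hS : S ⊆ ⋃₀ Cfam f)
    (C : Set P) (hC : C ∈ Cfam f) (hUS : ¬ U S ⊆ U C) :
    S ⊆ C := by
  obtain ⟨x, hxUS, hxUC⟩ := Set.not_subset.mp hUS
  intro s hs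
  obtain ⟨C', hC', hsC'⟩ := hS hs
  by_contra hsC
  have hsUC : s ∈ U C := hC'.2 C hC.1 ⟨hsC', hsC⟩
  apply hxUC
  intro y hy
  exact lt_trans (hsUC y hy) (hxUS s hs)
end

section
/- Under the standing assumptions, C* := ⋃𝒞 satisfies condition (i): for every S ⊆ C* with U_S ⊄ U_{C*}, one has f(U_S) ∈ C*. -/
/-- `C* := ⋃𝒞` satisfies condition (i): for every `S ⊆ C*` with `U S ⊈ U C*`,
one has `f (U S) ∈ C*`. -/
theorem stmt_7 {P : Type*} [PartialOrder P] [Nonempty P]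
    (hub : ∀ C : Set P, IsChain (· ≤ ·) C → ∃ x : P, ∀ y ∈ C, y ≤ x)
    (hnomax : ∀ m : P, ∃ x : P, m < x)
    (f : Set P → P) (hf : ∀ C : Set P, IsChain (· ≤ ·) C → f (U C) ∈ U C) :
    ∀ S ⊆ ⋃₀ Cfam f, ¬ U S ⊆ U (⋃₀ Cfam f) → f (U S) ∈ ⋃₀ Cfam f := by
  intro S hS hUS
  rw [Set.not_subset] at hUS
  obtain ⟨z, hzUS, hzUC⟩ := hUS
  simp only [U, Set.mem_setOf_eq, not_forall] at hzUC
  obtain ⟨c, hcC, hcz⟩ := hzUC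
  obtain ⟨C₀, hC₀, hcC₀⟩ := hcC
  have hSC₀ : S ⊆ C₀ := by
    intro s hs
    obtain ⟨C', hC', hsC'⟩ := hS hs
    by_contra hsn
    have hmem : s ∈ U C₀ := hC'.2 C₀ hC₀.1 ⟨hsC', hsn⟩
    exact hcz (lt_trans (hmem c hcC₀) (hzUS s hs))
  have hnot : ¬ U S ⊆ U C₀ := fun h => hcz (h hzUS c hcC₀)
  exact ⟨C₀, hC₀, hC₀.1.2 S hSC₀ hnot⟩
end

section
/- Under the standing assumptions, C* := ⋃𝒞 is itself a member of 𝒞, i.e., C* is a chain satisfying both condition (i-C*) and condition (ii-C*). -/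
/-- `C* := ⋃𝒞` is itself a member of `𝒞`. -/
theorem stmt_8 {P : Type*} [PartialOrder P] [Nonempty P]
    (hub : ∀ C : Set P, IsChain (· ≤ ·) C → ∃ x : P, ∀ y ∈ C, y ≤ x)
    (hnomax : ∀ m : P, ∃ x : P, m < x)
    (f : Set P → P) (hf : ∀ C : Set P, IsChain (· ≤ ·) C → f (U C) ∈ U C) :
    ⋃₀ Cfam f ∈ Cfam f := by
  -- C* is a chain
  have hchain : IsChain (· ≤ ·) (⋃₀ Cfam f) := by
    intro x hx y hy hxy
    obtain ⟨C, hC, hxC⟩ := hx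
    obtain ⟨C', hC', hyC'⟩ := hy
    by_cases hyC : y ∈ C
    · exact hC.1.1 hxC hyC hxy
    · exact Or.inl (hC'.2 C hC.1 ⟨hyC', hyC⟩ x hxC).le
  refine ⟨⟨hchain, ?_⟩, ?_⟩
  · -- condition (i)
    intro S hS hUS
    rw [Set.not_subset] at hUS
    obtain ⟨x, hxS, hxC⟩ := hUS
    simp only [U, Set.mem_setOf_eq, not_forall] at hxC
    obtain ⟨c, hc, hcx⟩ := hxC
    obtain ⟨C, hC, hcC⟩ := hc
    have hsc : ∀ s ∈ S, s ≤ c := by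
      intro s hsS
      rcases eq_or_ne s c with h | h
      · exact h.le
      · rcases hchain (hS hsS) ⟨C, hC, hcC⟩ h with h1 | h1
        · exact h1
        · exact absurd (lt_of_le_of_lt h1 (hxS s hsS)) hcx
    have hSC : S ⊆ C := by
      intro s hsS
      by_contra hsC
      obtain ⟨C'', hC'', hsC''⟩ := hS hsS
      have hlt : c < s := hC''.2 C hC.1 ⟨hsC'', hsC⟩ c hcC
      exact absurd (hsc s hsS) hlt.not_ge
    have hfm : f (U S) ∈ C := hC.1.2 S hSC (fun h => hcx (h hxS c hcC))
    exact ⟨C, hC, hfm⟩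
  · -- condition (ii)
    intro C' hC' x hx
    obtain ⟨C, hC, hxC⟩ := hx.1
    exact hC.2 C' hC' ⟨hxC, hx.2⟩
end

section
/- Under the standing assumptions, setting u := f(U_{C*}) and C** := C* ∪ {u}, the set C** is a chain of P, u is the maximum element of C**, and C** ⊄ C* (indeed u ∉ C*). -/
lemma cstar_chain {P : Type*} [PartialOrder P] (f : Set P → P) :
    IsChain (· ≤ ·) (⋃₀ Cfam f) := by
  intro x hx y hy hne
  obtain ⟨C, hC, hxC⟩ := hx
  obtain ⟨C', hC', hyC'⟩ := hy
  by_cases hx' : x ∈ C'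
  · exact hC'.1.1 hx' hyC' hne
  · have : x ∈ U C' := hC.2 C' hC'.1 ⟨hxC, hx'⟩
    exact Or.inr (this y hyC').le

/-- With `u := f (U C*)` and `C** := C* ∪ {u}`, the set `C**` is a chain of `P`,
`u` is the maximum element of `C**`, and `u ∉ C*` (so `C** ⊄ C*`). -/
theorem stmt_9 {P : Type*} [PartialOrder P] [Nonempty P]
    (hub : ∀ C : Set P, IsChain (· ≤ ·) C → ∃ x : P, ∀ y ∈ C, y ≤ x)
    (hnomax : ∀ m : P, ∃ x : P, m < x)
    (f : Set P → P) (hf : ∀ C : Set P, IsChain (· ≤ ·) C → f (U C) ∈ U C) :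
    IsChain (· ≤ ·) (⋃₀ Cfam f ∪ {f (U (⋃₀ Cfam f))}) ∧
      IsGreatest (⋃₀ Cfam f ∪ {f (U (⋃₀ Cfam f))}) (f (U (⋃₀ Cfam f))) ∧
      f (U (⋃₀ Cfam f)) ∉ ⋃₀ Cfam f ∧
      ¬ ⋃₀ Cfam f ∪ {f (U (⋃₀ Cfam f))} ⊆ ⋃₀ Cfam f := by
  set Cs := ⋃₀ Cfam f with hCs
  have hch : IsChain (· ≤ ·) Cs := cstar_chain f
  have hu : f (U Cs) ∈ U Cs := hf Cs hch
  have hnot : f (U Cs) ∉ Cs := fun h => lt_irrefl _ (hu _ h)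
  refine ⟨?_, ⟨Or.inr rfl, ?_⟩, hnot, ?_⟩
  · intro x hx y hy hne
    rcases hx with hx | hx <;> rcases hy with hy | hy
    · exact hch hx hy hne
    · rcases hy with rfl; exact Or.inl (hu x hx).le
    · rcases hx with rfl; exact Or.inr (hu y hy).le
    · rcases hx with rfl; rcases hy with rfl; exact absurd rfl hne
  · rintro y (hy | rfl)
    · exact (hu y hy).le
    · exact le_rfl
  · intro h
    exact hnot (h (Or.inr rfl))
end

section
/- Under the standing assumptions, setting u := f(U_{C*}) and C** := C* ∪ {u}, the chain C** satisfies condition (ii): for every C' ∈ 𝒞₀, one has C** \ C' ⊆ U_{C'}; consequently C** ∈ 𝒞. -/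
/-- With `u := f (U C*)` and `C** := C* ∪ {u}`, the chain `C**` satisfies
condition (ii): for every `C' ∈ 𝒞₀`, one has `C** \ C' ⊆ U C'`;
consequently `C** ∈ 𝒞`. -/
theorem stmt_11 {P : Type*} [PartialOrder P] [Nonempty P]
    (hub : ∀ C : Set P, IsChain (· ≤ ·) C → ∃ x : P, ∀ y ∈ C, y ≤ x)
    (hnomax : ∀ m : P, ∃ x : P, m < x)
    (f : Set P → P) (hf : ∀ C : Set P, IsChain (· ≤ ·) C → f (U C) ∈ U C) :
    (∀ C' ∈ Cfam0 f, (⋃₀ Cfam f ∪ {f (U (⋃₀ Cfam f))}) \ C' ⊆ U C') ∧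
      ⋃₀ Cfam f ∪ {f (U (⋃₀ Cfam f))} ∈ Cfam f := by
  classical
  set Cs := ⋃₀ Cfam f with hCsdef
  -- C* is a chain
  have hchain : IsChain (· ≤ ·) Cs := by
    rintro x ⟨C, hC, hxC⟩ y ⟨C', hC', hyC'⟩ hxy
    by_cases hx : x ∈ C'
    · exact hC'.1.1 hx hyC' hxy
    · have hxU : x ∈ U C' := hC.2 C' hC'.1 ⟨hxC, hx⟩
      exact Or.inr (hxU y hyC').le
  -- C* satisfies (ii)
  have hii : ∀ C' ∈ Cfam0 f, Cs \ C' ⊆ U C' := by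
    rintro C' hC' x ⟨⟨C, hC, hxC⟩, hx⟩
    exact hC.2 C' hC' ⟨hxC, hx⟩
  -- C* satisfies (i)
  have hi : ∀ S ⊆ Cs, ¬ U S ⊆ U Cs → f (U S) ∈ Cs := by
    intro S hS hUS
    obtain ⟨x, hxUS, hxnot⟩ := Set.not_subset.mp hUS
    have : ∃ z ∈ Cs, ¬ z < x := by
      by_contra h
      push_neg at h
      exact hxnot h
    obtain ⟨z, hzCs, hzx⟩ := this
    obtain ⟨C, hC, hzC⟩ := hzCs
    have hSC : S ⊆ C := by
      intro s hsS
      by_contra hsC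
      obtain ⟨C'', hC'', hsC''⟩ := hS hsS
      have hsU : s ∈ U C := hC''.2 C hC.1 ⟨hsC'', hsC⟩
      exact hzx (lt_trans (hsU z hzC) (hxUS s hsS))
    have hne : ¬ U S ⊆ U C := fun h => hzx (h hxUS z hzC)
    exact ⟨C, hC, hC.1.2 S hSC hne⟩
  set u := f (U Cs) with hudef
  have hu : u ∈ U Cs := hf Cs hchain
  -- key: if u ∉ C' for C' ∈ 𝒞₀, then u ∈ U C'
  have hkey : ∀ C' ∈ Cfam0 f, u ∉ C' → u ∈ U C' := by
    intro C' hC' huC'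
    set S := Cs ∩ C' with hSdef
    have hSchain : IsChain (· ≤ ·) S := hchain.mono Set.inter_subset_left
    have hfS : f (U S) ∈ U S := hf S hSchain
    by_cases h1 : U S ⊆ U Cs
    · have heq : U S = U Cs :=
        Set.Subset.antisymm h1 (fun x hx y hyS => hx y hyS.1)
      have hfu : f (U S) = u := by rw [heq]
      by_cases h2 : U S ⊆ U C'
      · rw [← hfu]
        exact h2 hfS
      · have hmem : f (U S) ∈ C' := hC'.2 S Set.inter_subset_right h2
        rw [hfu] at hmem
        exact absurd hmem huC'
    · have hfCs : f (U S) ∈ Cs := hi S Set.inter_subset_left h1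
      by_cases h2 : U S ⊆ U C'
      · have hfU : f (U S) ∈ U C' := h2 hfS
        have hlt : f (U S) < u := hu _ hfCs
        exact fun y hy => lt_trans (hfU y hy) hlt
      · have hfC' : f (U S) ∈ C' := hC'.2 S Set.inter_subset_right h2
        exact absurd (hfS _ ⟨hfCs, hfC'⟩) (lt_irrefl _)
  -- C** satisfies (ii)
  have hii' : ∀ C' ∈ Cfam0 f, (Cs ∪ {u}) \ C' ⊆ U C' := by
    rintro C' hC' x ⟨hx, hxC'⟩
    rcases hx with h | h
    · exact hii C' hC' ⟨h, hxC'⟩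
    · rw [Set.mem_singleton_iff] at h
      subst h
      exact hkey C' hC' hxC'
  -- C** is a chain
  have hchain' : IsChain (· ≤ ·) (Cs ∪ {u}) := by
    rintro x (hx | hx) y (hy | hy) hxy
    · exact hchain hx hy hxy
    · rw [Set.mem_singleton_iff] at hy; subst hy
      exact Or.inl (hu x hx).le
    · rw [Set.mem_singleton_iff] at hx; subst hx
      exact Or.inr (hu y hy).le
    · rw [Set.mem_singleton_iff] at hx hy; subst hx; subst hy
      exact absurd rfl hxy
  -- C** satisfies (i)
  have hi' : ∀ S ⊆ Cs ∪ {u}, ¬ U S ⊆ U (Cs ∪ {u}) → f (U S) ∈ Cs ∪ {u} := by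
    intro S hS hUS
    by_cases huS : u ∈ S
    · exfalso
      apply hUS
      intro x hx y hy
      have hux : u < x := hx u huS
      rcases hy with h | h
      · exact lt_trans (hu y h) hux
      · rw [Set.mem_singleton_iff] at h; subst h; exact hux
    · have hSCs : S ⊆ Cs := by
        intro s hs
        rcases hS hs with h | h
        · exact h
        · rw [Set.mem_singleton_iff] at h; subst h
          exact absurd hs huS
      by_cases h1 : U S ⊆ U Cs
      · have heq : U S = U Cs :=
          Set.Subset.antisymm h1 (fun x hx y hyS => hx y (hSCs hyS))
        right
        rw [Set.mem_singleton_iff, heq]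
      · left
        exact hi S hSCs h1
  exact ⟨hii', ⟨⟨hchain', hi'⟩, hii'⟩⟩
end
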